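/- The map sending each k-element subset a of X (|X| = ks) to the projective point p_a embeds CR(X,k,s) into the projective space PG(ks-2, F): distinct points of CR(X,k,s) map to distinct projective points, each block maps to s points spanning a projective subspace of dimension s-2, and distinct blocks map to distinct (s-2)-subspaces. -/

import Mathlib

/-- The representing vector of the projective point `p_c`: for a subset `c` of
`X = {0,…,n-1}` it is `Σ_{j∈c} e j` when `0 ∉ c`, and (using `p_c = p_{X∖c}`)
`Σ_{j∈cᶜ} e j` when `0 ∈ c`. -/
def pVec {V : Type*} [AddCommMonoid V] {n : ℕ} [NeZero n]
    (e : Fin n → V) (c : Finset (Fin n)) : V :=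
  if (0 : Fin n) ∈ c then ∑ j ∈ cᶜ, e j else ∑ j ∈ c, e j

/-- `CRPart k s B` : `B` is a block of `CR(X,k,s)` with `|X| = ks`, i.e. a partition of
`X = Fin (ks)` into `s` pairwise disjoint `k`-element subsets. -/
def CRPart {n : ℕ} (k s : ℕ) (B : Finset (Finset (Fin n))) : Prop :=
  B.card = s ∧ (∀ c ∈ B, c.card = k) ∧
    (∀ c ∈ B, ∀ c' ∈ B, c ≠ c' → Disjoint c c') ∧
    B.biUnion id = Finset.univ

/-- Any linearly independent family admits a "dual" family of functionals on the whole
space. -/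
lemma exists_coord {F V ι : Type*} [Field F] [AddCommGroup V] [Module F V] [DecidableEq ι]
    (v : ι → V) (hli : LinearIndependent F v) :
    ∃ π : ι → (V →ₗ[F] F),
      ∀ i j : ι, π i (v j) = if i = j then 1 else 0 := by
  classical
  set M := Submodule.span F (Set.range v) with hM
  let b : Module.Basis ι F M := Module.Basis.span hli
  obtain ⟨q, hq⟩ := Submodule.exists_isCompl M
  let proj := M.projectionOnto q hq
  refine ⟨fun i => (b.coord i).comp proj, fun i j => ?_⟩
  have hm : v j ∈ M := Submodule.subset_span ⟨j, rfl⟩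
  have hb : b j = ⟨v j, hm⟩ := Module.Basis.span_apply hli j
  have hproj : proj (v j) = ⟨v j, hm⟩ := by
    have := Submodule.projectionOnto_apply_left hq (⟨v j, hm⟩ : M)
    simpa using this
  simp only [LinearMap.comp_apply, hproj, ← hb, Module.Basis.coord_apply, Module.Basis.repr_self]
  simp [Finsupp.single_apply, eq_comm]

/-- The map `a ↦ p_a` embeds `CR(X,k,s)` (`|X| = ks`) into `PG(ks-2,F)`:
distinct points go to distinct projective points, each block goes to `s` points spanning
a subspace of projective dimension `s-2` (vector dimension `s-1`), and distinct blocks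
go to distinct `(s-2)`-subspaces. -/
theorem cr_embedding {F V : Type*} [Field F] [AddCommGroup V] [Module F V] [DecidableEq V]
    (k s n : ℕ) (hk : 0 < k) (hs : 3 ≤ s) (hn : n = k * s) [NeZero n]
    (e : Fin n → V)
    (hli : LinearIndependent F (fun i : {i : Fin n // i ≠ 0} => e i.1))
    (h0 : e 0 = ∑ i ∈ Finset.univ.erase (0 : Fin n), e i) :
    (∀ a b : Finset (Fin n), a.card = k → b.card = k →
        Submodule.span F {pVec e a} = Submodule.span F {pVec e b} → a = b) ∧
      (∀ B : Finset (Finset (Fin n)), CRPart k s B →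
        (B.image (pVec e)).card = s ∧
          Module.finrank F ↥(Submodule.span F (pVec e '' ↑B)) = s - 1) ∧
      (∀ B₁ B₂ : Finset (Finset (Fin n)), CRPart k s B₁ → CRPart k s B₂ →
        Submodule.span F (pVec e '' ↑B₁) = Submodule.span F (pVec e '' ↑B₂) → B₁ = B₂) := by
  classical
  obtain ⟨π, hπ⟩ := exists_coord (fun i : {i : Fin n // i ≠ 0} => e i.1) hli
  -- numeric facts
  have h3k : 3 * k ≤ n := by rw [hn]; nlinarith
  have hkn : k < n := by omega
  -- coordinates of sums over `0`-free sets
  have hsum : ∀ (a : Finset (Fin n)), (0 : Fin n) ∉ a → ∀ i : {i : Fin n // i ≠ 0},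
      π i (∑ j ∈ a, e j) = if i.1 ∈ a then 1 else 0 := by
    intro a ha i
    rw [map_sum]
    rw [Finset.sum_congr rfl (g := fun j => if i.1 = j then (1 : F) else 0)
      (fun j hj => by
        have hj0 : j ≠ 0 := fun h => ha (h ▸ hj)
        simpa [Subtype.ext_iff] using hπ i ⟨j, hj0⟩)]
    exact Finset.sum_ite_eq a i.1 (fun _ => (1 : F))
  -- the `0`-free representative of a set
  set A : Finset (Fin n) → Finset (Fin n) := fun a => if (0 : Fin n) ∈ a then aᶜ else a
    with hAdef
  have hA0 : ∀ a, (0 : Fin n) ∉ A a := by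
    intro a
    by_cases h : (0 : Fin n) ∈ a <;> simp [hAdef, h]
  have hAnot : ∀ a : Finset (Fin n), (0 : Fin n) ∉ a → A a = a := by
    intro a h; simp [hAdef, h]
  have hAin : ∀ a : Finset (Fin n), (0 : Fin n) ∈ a → A a = aᶜ := by
    intro a h; simp [hAdef, h]
  have hApv : ∀ a, pVec e a = ∑ j ∈ A a, e j := by
    intro a
    by_cases h : (0 : Fin n) ∈ a <;> simp [pVec, hAdef, h]
  have hπpv : ∀ (a : Finset (Fin n)) (i : {i : Fin n // i ≠ 0}),
      π i (pVec e a) = if i.1 ∈ A a then 1 else 0 := by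
    intro a i; rw [hApv]; exact hsum _ (hA0 a) i
  -- a separating functional
  have hsep : ∀ (x y : Finset (Fin n)) (i : Fin n) (hi : i ≠ 0),
      i ∈ A x → i ∉ A y → pVec e x ≠ pVec e y := by
    intro x y i hi hix hiy heq
    have h := congrArg (π ⟨i, hi⟩) heq
    rw [hπpv, hπpv, if_pos hix, if_neg hiy] at h
    exact one_ne_zero h
  ---- Part 1 ----
  have part1 : ∀ a b : Finset (Fin n), a.card = k → b.card = k →
      Submodule.span F {pVec e a} = Submodule.span F {pVec e b} → a = b := by
    intro a b hac hbc hsp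
    have hva : pVec e a ∈ Submodule.span F {pVec e b} :=
      hsp ▸ Submodule.mem_span_singleton_self _
    obtain ⟨c, hc⟩ := Submodule.mem_span_singleton.1 hva
    have hco : ∀ i : {i : Fin n // i ≠ 0},
        (if i.1 ∈ A a then (1 : F) else 0) = c * (if i.1 ∈ A b then 1 else 0) := by
      intro i
      have h := congrArg (π i) hc
      rw [map_smul, smul_eq_mul, hπpv, hπpv] at h
      exact h.symm
    -- `A a` is nonempty
    have hcardA : ∀ x : Finset (Fin n), x.card = k → (A x).card = k ∨ (A x).card = n - k := by
      intro x hx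
      by_cases h : (0 : Fin n) ∈ x
      · right; rw [hAin x h, Finset.card_compl, Fintype.card_fin, hx]
      · left; rw [hAnot x h, hx]
    have hApos : (A a).Nonempty := by
      rw [← Finset.card_pos]
      rcases hcardA a hac with h | h <;> omega
    obtain ⟨i0, hi0⟩ := hApos
    have hi0' : i0 ≠ 0 := fun h => hA0 a (h ▸ hi0)
    have h1 := hco ⟨i0, hi0'⟩
    rw [if_pos hi0] at h1
    by_cases hib : i0 ∈ A b
    · rw [if_pos hib, mul_one] at h1
      -- c = 1, hence equal coordinates, hence A a = A b
      have hAB : A a = A b := by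
        ext i
        by_cases hi : i = 0
        · subst hi; exact iff_of_false (hA0 a) (hA0 b)
        · have h2 := hco ⟨i, hi⟩
          rw [← h1, one_mul] at h2
          by_cases ha' : i ∈ A a <;> by_cases hb' : i ∈ A b <;>
            simp [ha', hb'] at h2 ⊢
      by_cases h0a : (0 : Fin n) ∈ a <;> by_cases h0b : (0 : Fin n) ∈ b
      · rw [hAin a h0a, hAin b h0b] at hAB
        have := congrArg (·ᶜ) hAB
        simpa using this
      · exfalso
        rw [hAin a h0a, hAnot b h0b] at hAB
        have := congrArg Finset.card hAB
        rw [Finset.card_compl, Fintype.card_fin, hac, hbc] at this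
        omega
      · exfalso
        rw [hAnot a h0a, hAin b h0b] at hAB
        have := congrArg Finset.card hAB
        rw [Finset.card_compl, Fintype.card_fin, hac, hbc] at this
        omega
      · rwa [hAnot a h0a, hAnot b h0b] at hAB
    · rw [if_neg hib, mul_zero] at h1
      exact absurd h1 one_ne_zero
  ---- structure of a block ----
  have hblock : ∀ B : Finset (Finset (Fin n)), CRPart k s B →
      ∃ c0, c0 ∈ B ∧ (0 : Fin n) ∈ c0 ∧
        (∀ c ∈ B.erase c0, (0 : Fin n) ∉ c) ∧
        (B.erase c0).biUnion id = c0ᶜ ∧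
        pVec e c0 = ∑ c ∈ B.erase c0, pVec e c ∧
        Set.InjOn (pVec e) ↑B ∧
        Submodule.span F (pVec e '' ↑B) = Submodule.span F (pVec e '' ↑(B.erase c0)) := by
    intro B hB
    obtain ⟨hcard, hsize, hdisj, hcover⟩ := hB
    have h0mem : (0 : Fin n) ∈ B.biUnion id := hcover ▸ Finset.mem_univ _
    obtain ⟨c0, hc0B, hc00'⟩ := Finset.mem_biUnion.1 h0mem
    have hc00 : (0 : Fin n) ∈ c0 := by simpa using hc00'
    have h0not : ∀ c ∈ B.erase c0, (0 : Fin n) ∉ c := by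
      intro c hc hc0c
      obtain ⟨hne, hcB⟩ := Finset.mem_erase.1 hc
      exact Finset.disjoint_left.1 (hdisj c hcB c0 hc0B hne) hc0c hc00
    have hbu : (B.erase c0).biUnion id = c0ᶜ := by
      ext i
      simp only [Finset.mem_biUnion, Finset.mem_compl, id]
      constructor
      · rintro ⟨c, hc, hic⟩
        obtain ⟨hne, hcB⟩ := Finset.mem_erase.1 hc
        exact fun hic0 => Finset.disjoint_left.1 (hdisj c hcB c0 hc0B hne) hic hic0
      · intro hic0
        have hmem : i ∈ B.biUnion id := hcover ▸ Finset.mem_univ i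
        obtain ⟨c, hcB, hic⟩ := Finset.mem_biUnion.1 hmem
        exact ⟨c, Finset.mem_erase.2 ⟨fun h => hic0 (h ▸ hic), hcB⟩, hic⟩
    have hsum0 : pVec e c0 = ∑ c ∈ B.erase c0, pVec e c := by
      have h1 : pVec e c0 = ∑ j ∈ c0ᶜ, e j := by simp [pVec, hc00]
      have hpd : Set.PairwiseDisjoint ↑(B.erase c0) (id : Finset (Fin n) → Finset (Fin n)) := by
        intro x hx y hy hxy
        exact hdisj x (Finset.mem_of_mem_erase hx) y (Finset.mem_of_mem_erase hy) hxy
      rw [h1, ← hbu, Finset.sum_biUnion hpd]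
      refine Finset.sum_congr rfl (fun c hc => ?_)
      simp [pVec, h0not c hc]
    -- injectivity on B
    have hB'card : (B.erase c0).card = s - 1 := by
      rw [Finset.card_erase_of_mem hc0B, hcard]
    have hne0 : ∀ c ∈ B, c.Nonempty := by
      intro c hc
      rw [← Finset.card_pos, hsize c hc]; exact hk
    have key0 : ∀ c' ∈ B.erase c0, pVec e c0 ≠ pVec e c' := by
      intro c' hc'e
      have hc' : c' ∈ B := Finset.mem_of_mem_erase hc'e
      have hc'ne : c' ≠ c0 := (Finset.mem_erase.1 hc'e).1
      obtain ⟨c'', hc''e, hc''ne⟩ :=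
        Finset.exists_mem_ne (by omega : 1 < (B.erase c0).card) c'
      obtain ⟨i, hi⟩ := hne0 c'' (Finset.mem_of_mem_erase hc''e)
      have hi0 : i ≠ 0 := fun h => h0not c'' hc''e (h ▸ hi)
      have hic0 : i ∈ c0ᶜ := by
        rw [← hbu]; exact Finset.mem_biUnion.2 ⟨c'', hc''e, hi⟩
      have hic' : i ∉ c' := by
        have hd := hdisj c'' (Finset.mem_of_mem_erase hc''e) c' hc' hc''ne
        exact fun h => Finset.disjoint_left.1 hd hi h
      refine hsep c0 c' i hi0 ?_ ?_
      · rw [hAin c0 hc00]; exact hic0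
      · rw [hAnot c' (h0not c' hc'e)]; exact hic'
    have key : ∀ c ∈ B, ∀ c' ∈ B, c ≠ c' → pVec e c ≠ pVec e c' := by
      intro c hc c' hc' hne
      by_cases h1 : c = c0
      · subst h1
        exact key0 c' (Finset.mem_erase.2 ⟨fun h => hne h.symm, hc'⟩)
      · have hce : c ∈ B.erase c0 := Finset.mem_erase.2 ⟨h1, hc⟩
        by_cases h2 : c' = c0
        · subst h2
          exact (key0 c hce).symm
        · have hc'e : c' ∈ B.erase c0 := Finset.mem_erase.2 ⟨h2, hc'⟩
          obtain ⟨i, hi⟩ := hne0 c hc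
          have hi0 : i ≠ 0 := fun h => h0not c hce (h ▸ hi)
          have hic' : i ∉ c' := fun h => Finset.disjoint_left.1 (hdisj c hc c' hc' hne) hi h
          refine hsep c c' i hi0 ?_ ?_
          · rw [hAnot c (h0not c hce)]; exact hi
          · rw [hAnot c' (h0not c' hc'e)]; exact hic'
    have hinj : Set.InjOn (pVec e) ↑B := by
      intro c hc c' hc' heq
      by_contra hne
      exact key c hc c' hc' hne heq
    -- span reduction
    have hspan : Submodule.span F (pVec e '' ↑B) =
        Submodule.span F (pVec e '' ↑(B.erase c0)) := by
      apply le_antisymm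
      · rw [Submodule.span_le]
        rintro x ⟨c, hc, rfl⟩
        by_cases h1 : c = c0
        · subst h1
          rw [hsum0]
          exact Submodule.sum_mem _
            (fun c hc => Submodule.subset_span ⟨c, Finset.mem_coe.2 hc, rfl⟩)
        · exact Submodule.subset_span
            ⟨c, Finset.mem_coe.2 (Finset.mem_erase.2 ⟨h1, Finset.mem_coe.1 hc⟩), rfl⟩
      · exact Submodule.span_mono
          (Set.image_mono (Finset.coe_subset.2 (Finset.erase_subset _ _)))
    exact ⟨c0, hc0B, hc00, h0not, hbu, hsum0, hinj, hspan⟩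
  ---- Part 2 ----
  have part2 : ∀ B : Finset (Finset (Fin n)), CRPart k s B →
      (B.image (pVec e)).card = s ∧
        Module.finrank F ↥(Submodule.span F (pVec e '' ↑B)) = s - 1 := by
    intro B hB
    obtain ⟨c0, hc0B, hc00, h0not, hbu, hsum0, hinj, hspan⟩ := hblock B hB
    obtain ⟨hcard, hsize, hdisj, hcover⟩ := hB
    have hB'card : (B.erase c0).card = s - 1 := by
      rw [Finset.card_erase_of_mem hc0B, hcard]
    constructor
    · rw [Finset.card_image_of_injOn hinj, hcard]
    · -- independence of the family indexed by `B.erase c0`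
      have hindep : LinearIndependent F
          (fun c : {x // x ∈ B.erase c0} => pVec e c.1) := by
        rw [Fintype.linearIndependent_iff]
        intro g hg c
        have hcB' : c.1 ∈ B.erase c0 := c.2
        obtain ⟨i, hi⟩ : c.1.Nonempty := by
          rw [← Finset.card_pos, hsize c.1 (Finset.mem_of_mem_erase hcB')]; exact hk
        have hi0 : i ≠ 0 := fun h => h0not c.1 hcB' (h ▸ hi)
        have h := congrArg (π ⟨i, hi0⟩) hg
        rw [map_sum, map_zero] at h
        have hrw : ∀ c' : {x // x ∈ B.erase c0},
            π ⟨i, hi0⟩ (g c' • pVec e c'.1) = g c' * (if i ∈ c'.1 then 1 else 0) := by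
          intro c'
          rw [map_smul, smul_eq_mul, hπpv, hAnot c'.1 (h0not c'.1 c'.2)]
        rw [Finset.sum_congr rfl (fun c' _ => hrw c')] at h
        rw [Finset.sum_eq_single c] at h
        · rw [if_pos hi, mul_one] at h; exact h
        · intro c' _ hne
          have hvne : c'.1 ≠ c.1 := fun hh => hne (Subtype.ext hh)
          have hd := hdisj c'.1 (Finset.mem_of_mem_erase c'.2) c.1
            (Finset.mem_of_mem_erase hcB') hvne
          rw [if_neg (fun hh => Finset.disjoint_right.1 hd hi hh), mul_zero]
        · intro hcon; exact absurd (Finset.mem_univ c) hcon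
      have hrange : Set.range (fun c : {x // x ∈ B.erase c0} => pVec e c.1)
          = pVec e '' ↑(B.erase c0) := by
        ext x
        simp only [Set.mem_range, Subtype.exists, Set.mem_image, Finset.mem_coe]
        tauto
      rw [hspan, ← hrange, finrank_span_eq_card hindep, Fintype.card_coe, hB'card]
  ---- Part 3 ----
  refine ⟨part1, part2, ?_⟩
  intro B₁ B₂ h1 h2 hsp
  obtain ⟨c01, hc01B, hc010, h0not1, hbu1, hsum1, hinj1, hspan1⟩ := hblock B₁ h1
  obtain ⟨c02, hc02B, hc020, h0not2, hbu2, hsum2, hinj2, hspan2⟩ := hblock B₂ h2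
  obtain ⟨hcard1, hsize1, hdisj1, hcover1⟩ := h1
  obtain ⟨hcard2, hsize2, hdisj2, hcover2⟩ := h2
  have hsub : B₁.erase c01 ⊆ B₂.erase c02 := by
    intro c hcB₁'
    have h0c : (0 : Fin n) ∉ c := h0not1 c hcB₁'
    have hck : c.card = k := hsize1 c (Finset.mem_of_mem_erase hcB₁')
    have hmem : pVec e c ∈ Submodule.span F (pVec e '' ↑(B₂.erase c02)) := by
      rw [← hspan2, ← hsp]
      exact Submodule.subset_span
        ⟨c, Finset.mem_coe.2 (Finset.mem_of_mem_erase hcB₁'), rfl⟩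
    rw [← Finset.coe_image] at hmem
    obtain ⟨g, -, hg⟩ := Submodule.mem_span_finset.1 hmem
    have hinj2' : ∀ x ∈ B₂.erase c02, ∀ y ∈ B₂.erase c02, pVec e x = pVec e y → x = y := by
      intro x hx y hy hxy
      exact hinj2 (Finset.mem_coe.2 (Finset.mem_of_mem_erase hx))
        (Finset.mem_coe.2 (Finset.mem_of_mem_erase hy)) hxy
    rw [Finset.sum_image hinj2'] at hg
    have hco : ∀ i : Fin n, i ≠ 0 →
        (∑ c' ∈ B₂.erase c02, g (pVec e c') * (if i ∈ c' then 1 else 0))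
          = (if i ∈ c then 1 else 0) := by
      intro i hi
      have h := congrArg (π ⟨i, hi⟩) hg
      rw [map_sum, hπpv, hAnot c h0c] at h
      have hrw : ∀ c' ∈ B₂.erase c02,
          π ⟨i, hi⟩ (g (pVec e c') • pVec e c')
            = g (pVec e c') * (if i ∈ c' then 1 else 0) := by
        intro c' hc'
        rw [map_smul, smul_eq_mul, hπpv, hAnot c' (h0not2 c' hc')]
      rw [Finset.sum_congr rfl hrw] at h
      exact h
    obtain ⟨i0, hi0⟩ : c.Nonempty := by rw [← Finset.card_pos, hck]; exact hk
    have hi00 : i0 ≠ 0 := fun h => h0c (h ▸ hi0)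
    have hi0cov : i0 ∈ (B₂.erase c02).biUnion id := by
      by_contra hcon
      have h := hco i0 hi00
      rw [if_pos hi0] at h
      have hz : ∑ c' ∈ B₂.erase c02, g (pVec e c') * (if i0 ∈ c' then 1 else 0) = 0 :=
        Finset.sum_eq_zero (fun c' hc' => by
          rw [if_neg (fun hh : i0 ∈ c' => hcon (Finset.mem_biUnion.2 ⟨c', hc', hh⟩)), mul_zero])
      rw [hz] at h
      exact one_ne_zero h.symm
    obtain ⟨c', hc'B₂', hi0c'⟩ := Finset.mem_biUnion.1 hi0cov
    have hi0c' : i0 ∈ c' := by simpa using hi0c'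
    have hdne : ∀ c'' ∈ B₂.erase c02, c'' ≠ c' → ∀ j ∈ c', j ∉ c'' := by
      intro c'' hc'' hne j hj
      have hd := hdisj2 c'' (Finset.mem_of_mem_erase hc'') c'
        (Finset.mem_of_mem_erase hc'B₂') hne
      exact fun hh => Finset.disjoint_right.1 hd hj hh
    have hlam : g (pVec e c') = 1 := by
      have h := hco i0 hi00
      rw [if_pos hi0, Finset.sum_eq_single c'] at h
      · rw [if_pos hi0c', mul_one] at h; exact h
      · intro c'' hc'' hne
        rw [if_neg (hdne c'' hc'' hne i0 hi0c'), mul_zero]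
      · intro hcon; exact absurd hc'B₂' hcon
    have hsub' : c' ⊆ c := by
      intro j hj
      have hj0 : j ≠ 0 := fun h => h0not2 c' hc'B₂' (h ▸ hj)
      have h := hco j hj0
      rw [Finset.sum_eq_single c'] at h
      · rw [if_pos hj, mul_one, hlam] at h
        by_contra hjc
        rw [if_neg hjc] at h
        exact one_ne_zero h
      · intro c'' hc'' hne
        rw [if_neg (hdne c'' hc'' hne j hj), mul_zero]
      · intro hcon; exact absurd hc'B₂' hcon
    have hceq : c' = c := Finset.eq_of_subset_of_card_le hsub'
      (by rw [hsize2 c' (Finset.mem_of_mem_erase hc'B₂'), hck])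
    exact hceq ▸ hc'B₂'
  have hB'eq : B₁.erase c01 = B₂.erase c02 := by
    apply Finset.eq_of_subset_of_card_le hsub
    rw [Finset.card_erase_of_mem hc01B, Finset.card_erase_of_mem hc02B, hcard1, hcard2]
  have hc0eq : c01 = c02 := by
    have h1c : c01ᶜ = c02ᶜ := by rw [← hbu1, ← hbu2, hB'eq]
    have := congrArg (·ᶜ) h1c
    simpa using this
  calc B₁ = insert c01 (B₁.erase c01) := (Finset.insert_erase hc01B).symm
    _ = insert c02 (B₂.erase c02) := by rw [hB'eq, hc0eq]
    _ = B₂ := Finset.insert_erase hc02B
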